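/- arXiv:1506.07382 — 4 statements merged into one kernel-verified Lean document; each statement's English description precedes it below -/
import Mathlib

section
/- Let α ∈ (0,1] and p a real number with p ≥ 1 (or more generally p such that Γ(p+n) is defined). For x > 0, T_α(x^{pα}·(J_α)_p(x)) = α·x^{pα}·(J_α)_{p−1}(x), where (J_α)_q(x) = Σ_{n=0}^∞ ((−1)^n/(n!·Γ(q+n+1)))·(x^α/2)^{2n+q}. -/
open Real

noncomputable def confDeriv (α : ℝ) (f : ℝ → ℝ) (x : ℝ) : ℝ :=
  x ^ (1 - α) * deriv f x

noncomputable def confBesselJ (α q : ℝ) (x : ℝ) : ℝ :=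
  ∑' n : ℕ, ((-1 : ℝ) ^ n / ((n.factorial : ℝ) * Real.Gamma (q + n + 1)))
    * (x ^ α / 2) ^ (2 * (n : ℝ) + q)

lemma aux_one_le_Gamma {y : ℝ} (hy : 2 ≤ y) : 1 ≤ Real.Gamma y := by
  rcases eq_or_lt_of_le hy with h | h
  · rw [← h, Real.Gamma_two]
  · exact le_of_lt (by
      have := Real.Gamma_strictMonoOn_Ici (Set.self_mem_Ici) (le_of_lt h) h
      rwa [Real.Gamma_two] at this)

lemma aux_base_pow (α c t : ℝ) (ht : 0 < t) :
    (t ^ α / 2) ^ c = t ^ (α * c) / 2 ^ c := by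
  rw [Real.div_rpow (Real.rpow_nonneg ht.le α) (by norm_num : (0:ℝ) ≤ 2),
    Real.rpow_mul ht.le]

theorem conformable_bessel_deriv_i (α : ℝ) (hα : α ∈ Set.Ioc (0:ℝ) 1)
    (p : ℝ) (hp : 1 ≤ p) (x : ℝ) (hx : 0 < x) :
    confDeriv α (fun t => t ^ (p * α) * confBesselJ α p t) x
      = α * x ^ (p * α) * confBesselJ α (p - 1) x := by
  obtain ⟨hα0, hα1⟩ := hα
  have hp0 : 0 < p := lt_of_lt_of_le one_pos hp
  set e : ℕ → ℝ := fun n => α * (2 * (n : ℝ) + 2 * p) with he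
  set C : ℕ → ℝ := fun n =>
    (-1 : ℝ) ^ n /
      ((n.factorial : ℝ) * Real.Gamma (p + n + 1) * 2 ^ (2 * (n : ℝ) + p)) with hC
  have hGpos : ∀ n : ℕ, 0 < Real.Gamma (p + n) :=
    fun n => Real.Gamma_pos_of_pos (by positivity)
  have hG1pos : ∀ n : ℕ, 0 < Real.Gamma (p + n + 1) :=
    fun n => Real.Gamma_pos_of_pos (by positivity)
  have hGrec : ∀ n : ℕ, Real.Gamma (p + n + 1) = (p + n) * Real.Gamma (p + n) :=
    fun n => Real.Gamma_add_one (by positivity)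
  -- Step 1: rewrite the function as a power series in rpow on Ioi 0
  have hfeq : ∀ t ∈ Set.Ioi (0:ℝ),
      t ^ (p * α) * confBesselJ α p t = ∑' n, C n * t ^ (e n) := by
    intro t ht
    have ht : (0:ℝ) < t := ht
    rw [confBesselJ, ← tsum_mul_left]
    refine tsum_congr fun n => ?_
    rw [aux_base_pow α _ t ht]
    have hexp : e n = p * α + α * (2 * (n : ℝ) + p) := by simp only [he]; ring
    rw [hexp, Real.rpow_add ht]
    have h2 : (2:ℝ) ^ (2 * (n : ℝ) + p) ≠ 0 := by positivity
    have h3 : Real.Gamma (p + n + 1) ≠ 0 := (hG1pos n).ne'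
    have h4 : ((n.factorial : ℝ)) ≠ 0 := by positivity
    simp only [hC]
    field_simp
  -- Step 2: differentiate the series
  have hx2 : (0:ℝ) < x / 2 := by linarith
  have hmem : x ∈ Set.Ioo (x/2) (2*x) := ⟨by linarith, by linarith⟩
  set M : ℝ := (x/2) ^ (2*α*p - 1) + (2*x) ^ (2*α*p - 1) with hM
  set r : ℝ := (2*x) ^ (2*α) with hr
  have hr0 : 0 ≤ r := Real.rpow_nonneg (by linarith) _
  have hM0 : 0 ≤ M := by positivity
  set u : ℕ → ℝ := fun n => (2*α*(1+p)*M) * ((2*r) ^ n / n.factorial) with hu_def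
  have hu : Summable u := (Real.summable_pow_div_factorial (2*r)).mul_left _
  have hg : ∀ (n : ℕ) (y : ℝ), y ∈ Set.Ioo (x/2) (2*x) →
      HasDerivAt (fun t => C n * t ^ (e n)) (C n * (e n * y ^ (e n - 1))) y := by
    intro n y hy
    have hy0 : (0:ℝ) < y := lt_trans hx2 hy.1
    exact (Real.hasDerivAt_rpow_const (Or.inl hy0.ne')).const_mul (C n)
  have hCabs : ∀ n : ℕ, |C n| ≤ 1 / n.factorial := by
    intro n
    have h1 : (1:ℝ) ≤ Real.Gamma (p + n + 1) := by
      apply aux_one_le_Gamma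
      have : (0:ℝ) ≤ (n:ℝ) := Nat.cast_nonneg n
      linarith
    have h2 : (1:ℝ) ≤ 2 ^ (2 * (n : ℝ) + p) := by
      apply Real.one_le_rpow (by norm_num)
      have : (0:ℝ) ≤ (n:ℝ) := Nat.cast_nonneg n
      linarith
    have hfac : (1:ℝ) ≤ n.factorial := by exact_mod_cast Nat.one_le_iff_ne_zero.mpr n.factorial_ne_zero
    have hden : (n.factorial : ℝ) ≤ (n.factorial : ℝ) * Real.Gamma (p + n + 1) * 2 ^ (2 * (n : ℝ) + p) := by
      have a1 : (n.factorial : ℝ) ≤ (n.factorial : ℝ) * Real.Gamma (p + n + 1) :=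
        le_mul_of_one_le_right (by positivity) h1
      have a2 : (n.factorial : ℝ) * Real.Gamma (p + n + 1) ≤
          (n.factorial : ℝ) * Real.Gamma (p + n + 1) * 2 ^ (2 * (n : ℝ) + p) :=
        le_mul_of_one_le_right (by positivity) h2
      linarith
    rw [hC, abs_div, abs_pow, abs_neg, abs_one, one_pow]
    rw [abs_of_pos (by positivity : (0:ℝ) < (n.factorial : ℝ) * Real.Gamma (p + n + 1) * 2 ^ (2 * (n : ℝ) + p))]
    exact one_div_le_one_div_of_le (by positivity) hden
  have hg' : ∀ (n : ℕ) (y : ℝ), y ∈ Set.Ioo (x/2) (2*x) →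
      ‖C n * (e n * y ^ (e n - 1))‖ ≤ u n := by
    intro n y hy
    have hy0 : (0:ℝ) < y := lt_trans hx2 hy.1
    have hen0 : 0 ≤ e n := by
      have : (0:ℝ) ≤ (n:ℝ) := Nat.cast_nonneg n
      simp only [he]; nlinarith
    have h2n : (n:ℝ) + 1 ≤ 2 ^ n := by exact_mod_cast Nat.lt_two_pow_self (n := n)
    have hkey : (n:ℝ) + p ≤ (1+p) * 2 ^ n := by
      nlinarith [(Nat.cast_nonneg n : (0:ℝ) ≤ n)]
    have hen : e n ≤ 2*α*(1+p) * 2 ^ n := by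
      have := mul_le_mul_of_nonneg_left hkey (by linarith : (0:ℝ) ≤ 2*α)
      simp only [he]; nlinarith
    have hsplit : y ^ (e n - 1) = (y ^ (2*α)) ^ n * y ^ (2*α*p - 1) := by
      rw [← Real.rpow_natCast (y ^ (2*α)) n, ← Real.rpow_mul hy0.le, ← Real.rpow_add hy0]
      congr 1
      simp only [he]; ring
    have hb1 : (y ^ (2*α)) ^ n ≤ r ^ n :=
      pow_le_pow_left₀ (Real.rpow_nonneg hy0.le _)
        (Real.rpow_le_rpow hy0.le hy.2.le (by positivity)) n
    have hb2 : y ^ (2*α*p - 1) ≤ M := by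
      rcases le_or_gt 0 (2*α*p - 1) with hc | hc
      · have h1 : y ^ (2*α*p-1) ≤ (2*x) ^ (2*α*p-1) := Real.rpow_le_rpow hy0.le hy.2.le hc
        have h0 : 0 ≤ (x/2) ^ (2*α*p-1) := Real.rpow_nonneg hx2.le _
        rw [hM]; linarith
      · have h1 : y ^ (2*α*p-1) ≤ (x/2) ^ (2*α*p-1) :=
          Real.rpow_le_rpow_of_nonpos hx2 hy.1.le hc.le
        have h0 : 0 ≤ (2*x) ^ (2*α*p-1) := Real.rpow_nonneg (by linarith) _
        rw [hM]; linarith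
    have hyp0 : (0:ℝ) ≤ y ^ (e n - 1) := Real.rpow_nonneg hy0.le _
    have hnorm : ‖C n * (e n * y ^ (e n - 1))‖ = |C n| * (e n * y ^ (e n - 1)) := by
      rw [Real.norm_eq_abs, abs_mul, abs_of_nonneg (mul_nonneg hen0 hyp0)]
    rw [hnorm]
    calc |C n| * (e n * y ^ (e n - 1))
        ≤ (1 / n.factorial) * ((2*α*(1+p) * 2 ^ n) * (r ^ n * M)) := by
          apply mul_le_mul (hCabs n) ?_ (mul_nonneg hen0 hyp0) (by positivity)
          apply mul_le_mul hen ?_ hyp0 (by positivity)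
          rw [hsplit]
          exact mul_le_mul hb1 hb2 (Real.rpow_nonneg hy0.le _) (pow_nonneg hr0 n)
      _ = u n := by
          rw [hu_def]
          simp only [mul_pow]
          have hfac : (0:ℝ) < (n.factorial : ℝ) := by positivity
          field_simp
  have hS : Summable fun n => C n * x ^ (e n) := by
    apply Summable.of_norm_bounded
      ((Real.summable_pow_div_factorial (x ^ (2*α))).mul_left (x ^ (2*α*p)))
    intro n
    have hsplit : x ^ (e n) = (x ^ (2*α)) ^ n * x ^ (2*α*p) := by
      rw [← Real.rpow_natCast (x ^ (2*α)) n, ← Real.rpow_mul hx.le, ← Real.rpow_add hx]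
      congr 1
      simp only [he]; ring
    have hxe : (0:ℝ) ≤ x ^ (e n) := Real.rpow_nonneg hx.le _
    rw [Real.norm_eq_abs, abs_mul, abs_of_nonneg hxe]
    calc |C n| * x ^ (e n) ≤ (1 / n.factorial) * ((x ^ (2*α)) ^ n * x ^ (2*α*p)) := by
          rw [hsplit]
          exact mul_le_mul (hCabs n) le_rfl (by rw [← hsplit]; exact hxe) (by positivity)
      _ = x ^ (2*α*p) * ((x ^ (2*α)) ^ n / n.factorial) := by
          have hfac : (0:ℝ) < (n.factorial : ℝ) := by positivity
          field_simp
  have hder : HasDerivAt (fun t => ∑' n, C n * t ^ (e n))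
      (∑' n, C n * (e n * x ^ (e n - 1))) x :=
    hasDerivAt_tsum_of_isPreconnected hu isOpen_Ioo isPreconnected_Ioo hg hg' hmem hS hmem
  -- Step 3: conclude
  have heqf : (fun t => t ^ (p * α) * confBesselJ α p t)
      =ᶠ[nhds x] (fun t => ∑' n, C n * t ^ (e n)) :=
    Filter.eventuallyEq_of_mem (isOpen_Ioi.mem_nhds hx) hfeq
  rw [confDeriv, heqf.deriv_eq, hder.deriv, confBesselJ, ← tsum_mul_left, ← tsum_mul_left]
  refine tsum_congr fun n => ?_
  rw [show p - 1 + (n : ℝ) + 1 = p + n by ring, aux_base_pow α _ x hx]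
  have hfacne : ((n.factorial : ℝ)) ≠ 0 := by positivity
  have hGne : Real.Gamma (p + n) ≠ 0 := (hGpos n).ne'
  have hpn : (p : ℝ) + n ≠ 0 := by positivity
  have h2ne : (2:ℝ) ^ (2 * (n : ℝ) + (p - 1)) ≠ 0 := by positivity
  have hcoef : C n * e n =
      α * (-1 : ℝ) ^ n / ((n.factorial : ℝ) * Real.Gamma (p + n) * 2 ^ (2 * (n : ℝ) + (p - 1))) := by
    have h2 : (2:ℝ) ^ (2 * (n : ℝ) + p) = 2 ^ (2 * (n : ℝ) + (p - 1)) * 2 := by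
      rw [show 2 * (n : ℝ) + p = (2 * (n : ℝ) + (p - 1)) + 1 by ring,
        Real.rpow_add two_pos, Real.rpow_one]
    simp only [hC, he, hGrec n, h2]
    field_simp
    ring
  have hxsplit : x ^ (1 - α) * x ^ (e n - 1)
      = x ^ (p * α) * x ^ (α * (2 * (n : ℝ) + (p - 1))) := by
    rw [← Real.rpow_add hx, ← Real.rpow_add hx]
    congr 1
    simp only [he]; ring
  calc x ^ (1 - α) * (C n * (e n * x ^ (e n - 1)))
      = (C n * e n) * (x ^ (1 - α) * x ^ (e n - 1)) := by ring
    _ = (C n * e n) * (x ^ (p * α) * x ^ (α * (2 * (n : ℝ) + (p - 1)))) := by rw [hxsplit]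
    _ = α * x ^ (p * α) * ((-1 : ℝ) ^ n / ((n.factorial : ℝ) * Real.Gamma (p + n)) *
          (x ^ (α * (2 * (n : ℝ) + (p - 1))) / 2 ^ (2 * (n : ℝ) + (p - 1)))) := by
        rw [hcoef]
        field_simp
end

section
/- Let α ∈ (0,1] and p ≥ 0 real. For x > 0, T_α(x^{−pα}·(J_α)_p(x)) = −α·x^{−pα}·(J_α)_{p+1}(x), where (J_α)_q(x) = Σ_{n=0}^∞ ((−1)^n/(n!·Γ(q+n+1)))·(x^α/2)^{2n+q}. -/
open Real

namespace ConfBesselAux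

noncomputable def A (p : ℝ) (n : ℕ) : ℝ :=
  (-1 : ℝ) ^ n / ((n.factorial : ℝ) * Real.Gamma (p + n + 1) * (2:ℝ) ^ (2 * (n:ℝ) + p))

noncomputable def F (p α : ℝ) (n : ℕ) (t : ℝ) : ℝ := A p n * t ^ (2 * α * (n:ℝ))

noncomputable def Fd (p α : ℝ) (n : ℕ) (t : ℝ) : ℝ :=
  A p n * (2 * α * ((n:ℝ) * t ^ (2 * α * (n:ℝ) - 1)))

lemma gamma_lb (p : ℝ) (hp : 0 ≤ p) (n : ℕ) :
    (n.factorial : ℝ) * Real.Gamma (p + 1) ≤ Real.Gamma (p + n + 1) := by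
  induction n with
  | zero => simp
  | succ n ih =>
    have hpos : (0:ℝ) < p + n + 1 := by positivity
    have h1 : Real.Gamma (p + (n+1 : ℕ) + 1) = (p + n + 1) * Real.Gamma (p + n + 1) := by
      have h2 : (p + (n+1 : ℕ) + 1 : ℝ) = (p + n + 1) + 1 := by push_cast; ring
      rw [h2, Real.Gamma_add_one (ne_of_gt hpos)]
    rw [h1]
    have hfe : ((n+1 : ℕ).factorial : ℝ) = (n+1 : ℝ) * (n.factorial : ℝ) := by
      rw [Nat.factorial_succ]; push_cast; ring
    have hΓp : 0 < Real.Gamma (p + 1) := Real.Gamma_pos_of_pos (by positivity)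
    calc ((n+1 : ℕ).factorial : ℝ) * Real.Gamma (p + 1)
        = (n+1 : ℝ) * ((n.factorial : ℝ) * Real.Gamma (p + 1)) := by rw [hfe]; ring
      _ ≤ (p + n + 1) * Real.Gamma (p + n + 1) :=
          mul_le_mul (by push_cast; linarith) ih (by positivity) (by linarith)

lemma succ_le_two_factorial (n : ℕ) : (n:ℝ) + 1 ≤ 2 * (n.factorial : ℝ) := by
  have : n + 1 ≤ 2 * n.factorial := by
    induction n with
    | zero => simp
    | succ n ih =>
      rw [Nat.factorial_succ]
      have h1 : 1 ≤ n.factorial := Nat.one_le_iff_ne_zero.mpr (Nat.factorial_ne_zero n)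
      nlinarith
  exact_mod_cast this

lemma summable_master (p r : ℝ) (hp : 0 ≤ p) (hr : 0 ≤ r) :
    Summable (fun n : ℕ => ((n:ℝ) + 1) * r ^ n / ((n.factorial : ℝ) * Real.Gamma (p + n + 1))) := by
  have hΓp : 0 < Real.Gamma (p + 1) := Real.Gamma_pos_of_pos (by positivity)
  have hΓ : ∀ n : ℕ, 0 < Real.Gamma (p + n + 1) := fun n => Real.Gamma_pos_of_pos (by positivity)
  apply Summable.of_nonneg_of_le (fun n => by positivity) (fun n => ?_)
    ((Real.summable_pow_div_factorial r).mul_left (2 / Real.Gamma (p + 1)))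
  have hf : (0:ℝ) < n.factorial := by exact_mod_cast n.factorial_pos
  calc ((n:ℝ) + 1) * r ^ n / ((n.factorial : ℝ) * Real.Gamma (p + n + 1))
      ≤ (2 * (n.factorial : ℝ) * r ^ n) /
        ((n.factorial : ℝ) * ((n.factorial : ℝ) * Real.Gamma (p + 1))) := by
        apply div_le_div₀ (by positivity)
          (by nlinarith [succ_le_two_factorial n, pow_nonneg hr n])
          (by positivity)
          (by nlinarith [gamma_lb p hp n, hf])
    _ = 2 / Real.Gamma (p + 1) * (r ^ n / (n.factorial : ℝ)) := by
        field_simp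

lemma key1 (p α : ℝ) (hp : 0 ≤ p) (n : ℕ) (t : ℝ) (ht : 0 < t) :
    t ^ (-(p * α)) * (((-1 : ℝ) ^ n / ((n.factorial : ℝ) * Real.Gamma (p + n + 1)))
      * (t ^ α / 2) ^ (2 * (n : ℝ) + p)) = F p α n t := by
  have hΓ : 0 < Real.Gamma (p + n + 1) := Real.Gamma_pos_of_pos (by positivity)
  have hf : (0:ℝ) < n.factorial := by exact_mod_cast n.factorial_pos
  have h2 : (0:ℝ) < (2:ℝ) ^ (2 * (n:ℝ) + p) := Real.rpow_pos_of_pos (by norm_num) _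
  have hP : (0:ℝ) < t ^ (p * α) := Real.rpow_pos_of_pos ht _
  have e1 : (t ^ α / 2 : ℝ) ^ (2 * (n:ℝ) + p)
      = t ^ (α * (2 * (n:ℝ) + p)) / (2:ℝ) ^ (2 * (n:ℝ) + p) := by
    rw [Real.div_rpow (Real.rpow_nonneg ht.le α) (by norm_num), ← Real.rpow_mul ht.le]
  have e2 : t ^ (α * (2 * (n:ℝ) + p)) = t ^ (2 * α * (n:ℝ)) * t ^ (p * α) := by
    rw [show α * (2 * (n:ℝ) + p) = 2 * α * (n:ℝ) + p * α by ring, Real.rpow_add ht]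
  have e3 : t ^ (-(p * α)) = (t ^ (p * α))⁻¹ := Real.rpow_neg ht.le _
  rw [e1, e2, e3, F, A]
  field_simp

lemma key2 (p α : ℝ) (hp : 0 ≤ p) (m : ℕ) (x : ℝ) (hx : 0 < x) :
    x ^ (1 - α) * Fd p α (m+1) x
      = -(α * (x ^ (-(p * α)) * (((-1 : ℝ) ^ m / ((m.factorial : ℝ) * Real.Gamma (p + 1 + m + 1)))
          * (x ^ α / 2) ^ (2 * (m : ℝ) + (p + 1))))) := by
  have hΓ : 0 < Real.Gamma (p + 1 + m + 1) := Real.Gamma_pos_of_pos (by positivity)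
  have hf : (0:ℝ) < m.factorial := by exact_mod_cast m.factorial_pos
  have hT : (0:ℝ) < (2:ℝ) ^ (2 * (m:ℝ) + (p + 1)) := Real.rpow_pos_of_pos (by norm_num) _
  have hb : (0:ℝ) < x ^ (1 - α) := Real.rpow_pos_of_pos hx _
  have hc : (0:ℝ) < x ^ (p * α) := Real.rpow_pos_of_pos hx _
  have ha : (0:ℝ) < x ^ (2 * α * (m:ℝ) + α) := Real.rpow_pos_of_pos hx _
  rw [Fd, A]
  -- rewrite casts
  have c1 : ((m+1 : ℕ) : ℝ) = (m:ℝ) + 1 := by push_cast; ring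
  have c2 : (((m+1 : ℕ).factorial : ℝ)) = ((m:ℝ) + 1) * (m.factorial : ℝ) := by
    rw [Nat.factorial_succ]; push_cast; ring
  have c3 : Real.Gamma (p + ((m+1 : ℕ) : ℝ) + 1) = Real.Gamma (p + 1 + m + 1) := by
    congr 1; push_cast; ring
  have c4 : (2:ℝ) ^ (2 * ((m+1 : ℕ) : ℝ) + p) = (2:ℝ) ^ (2 * (m:ℝ) + (p + 1)) * 2 := by
    rw [show 2 * ((m+1 : ℕ) : ℝ) + p = (2 * (m:ℝ) + (p + 1)) + 1 by push_cast; ring,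
      Real.rpow_add (by norm_num : (0:ℝ) < 2), Real.rpow_one]
  have c5 : ((-1 : ℝ)) ^ (m+1) = (-1 : ℝ) ^ m * (-1) := pow_succ _ _
  have e1 : x ^ (2 * α * (((m+1 : ℕ)) : ℝ) - 1)
      = x ^ (2 * α * (m:ℝ) + α) / x ^ (1 - α) := by
    rw [show 2 * α * (((m+1 : ℕ)) : ℝ) - 1 = (2 * α * (m:ℝ) + α) - (1 - α) by push_cast; ring,
      Real.rpow_sub hx]
  have e2 : (x ^ α / 2 : ℝ) ^ (2 * (m:ℝ) + (p + 1))
      = x ^ (2 * α * (m:ℝ) + α) * x ^ (p * α) / (2:ℝ) ^ (2 * (m:ℝ) + (p + 1)) := by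
    rw [Real.div_rpow (Real.rpow_nonneg hx.le α) (by norm_num), ← Real.rpow_mul hx.le,
      show α * (2 * (m:ℝ) + (p + 1)) = (2 * α * (m:ℝ) + α) + p * α by ring,
      Real.rpow_add hx]
  have e3 : x ^ (-(p * α)) = (x ^ (p * α))⁻¹ := Real.rpow_neg hx.le _
  rw [c2, c3, c4, c5, e1, e2, e3, c1]
  have hm1 : ((m:ℝ) + 1) ≠ 0 := by positivity
  field_simp

end ConfBesselAux

open ConfBesselAux in
theorem conformable_bessel_deriv_ii (α : ℝ) (hα : α ∈ Set.Ioc (0:ℝ) 1)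
    (p : ℝ) (hp : 0 ≤ p) (x : ℝ) (hx : 0 < x) :
    confDeriv α (fun t => t ^ (-(p * α)) * confBesselJ α p t) x
      = -(α * x ^ (-(p * α)) * confBesselJ α (p + 1) x) := by
  obtain ⟨hα0, hα1⟩ := hα
  have hΓ : ∀ n : ℕ, 0 < Real.Gamma (p + n + 1) := fun n => Real.Gamma_pos_of_pos (by positivity)
  set R : ℝ := (2 * x) ^ (2 * α) with hR
  have hRpos : 0 < R := Real.rpow_pos_of_pos (by linarith) _
  have pow_rpow : ∀ t : ℝ, 0 < t → ∀ n : ℕ, t ^ (2 * α * (n:ℝ)) = (t ^ (2*α)) ^ n := by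
    intro t ht n
    rw [← Real.rpow_natCast (t ^ (2*α)) n, ← Real.rpow_mul ht.le]
  have habsA : ∀ n : ℕ, |A p n| ≤ 1 / ((n.factorial : ℝ) * Real.Gamma (p + n + 1)) := by
    intro n
    have h2 : (1:ℝ) ≤ (2:ℝ) ^ (2 * (n:ℝ) + p) := Real.one_le_rpow (by norm_num) (by positivity)
    have hf : (0:ℝ) < n.factorial := by exact_mod_cast n.factorial_pos
    rw [A, abs_div, abs_pow, abs_neg, abs_one, one_pow,
      abs_of_pos (by positivity : (0:ℝ) < (n.factorial : ℝ) * Real.Gamma (p + n + 1)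
        * (2:ℝ) ^ (2 * (n:ℝ) + p))]
    apply div_le_div₀ (by positivity) le_rfl (by positivity)
    exact (le_mul_iff_one_le_right (by positivity)).mpr h2
  set u : ℕ → ℝ := fun n => (2 * α * (x/2)⁻¹) *
      (((n:ℝ) + 1) * R ^ n / ((n.factorial : ℝ) * Real.Gamma (p + n + 1))) with hu_def
  have hu : Summable u := (summable_master p R hp hRpos.le).mul_left _
  have hs : x ∈ Set.Ioo (x/2) (2*x) := ⟨by linarith, by linarith⟩
  have htpos : ∀ t ∈ Set.Ioo (x/2) (2*x), 0 < t := fun t ht => lt_trans (by linarith) ht.1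
  have hderiv : ∀ (n : ℕ), ∀ t ∈ Set.Ioo (x/2) (2*x), HasDerivAt (F p α n) (Fd p α n t) t := by
    intro n t ht
    have h := (Real.hasDerivAt_rpow_const (p := 2 * α * (n:ℝ))
      (Or.inl (ne_of_gt (htpos t ht)))).const_mul (A p n)
    have : A p n * (2 * α * (n:ℝ) * t ^ (2 * α * (n:ℝ) - 1)) = Fd p α n t := by
      rw [Fd]; ring
    rw [this] at h
    exact h
  have hbound : ∀ (n : ℕ), ∀ t ∈ Set.Ioo (x/2) (2*x), ‖Fd p α n t‖ ≤ u n := by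
    intro n t ht
    have ht0 := htpos t ht
    have hrp : (0:ℝ) < t ^ (2 * α * (n:ℝ) - 1) := Real.rpow_pos_of_pos ht0 _
    have h1 : t ^ (2 * α * (n:ℝ) - 1) ≤ R ^ n * (x/2)⁻¹ := by
      have e1 : t ^ (2 * α * (n:ℝ) - 1) = t ^ (2 * α * (n:ℝ)) * t⁻¹ := by
        rw [show 2 * α * (n:ℝ) - 1 = 2 * α * (n:ℝ) + (-1) by ring, Real.rpow_add ht0,
          Real.rpow_neg_one]
      rw [e1]
      have h2 : t ^ (2 * α * (n:ℝ)) ≤ R ^ n := by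
        rw [pow_rpow t ht0 n, hR]
        exact pow_le_pow_left₀ (Real.rpow_nonneg ht0.le _)
          (Real.rpow_le_rpow ht0.le (le_of_lt ht.2) (by positivity)) n
      have h3 : t⁻¹ ≤ (x/2)⁻¹ := inv_anti₀ (by linarith) (le_of_lt ht.1)
      exact mul_le_mul h2 h3 (by positivity) (by positivity)
    rw [Fd, Real.norm_eq_abs, abs_mul,
      abs_of_nonneg (by positivity : (0:ℝ) ≤ 2 * α * ((n:ℝ) * t ^ (2 * α * (n:ℝ) - 1)))]
    have hstep1 : (n:ℝ) * t ^ (2 * α * (n:ℝ) - 1) ≤ ((n:ℝ) + 1) * (R ^ n * (x/2)⁻¹) :=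
      mul_le_mul (by linarith) h1 hrp.le (by positivity)
    calc |A p n| * (2 * α * ((n:ℝ) * t ^ (2 * α * (n:ℝ) - 1)))
        ≤ (1 / ((n.factorial : ℝ) * Real.Gamma (p + n + 1)))
          * (2 * α * (((n:ℝ) + 1) * (R ^ n * (x/2)⁻¹))) := by
          apply mul_le_mul (habsA n) (by nlinarith) (by positivity) (by positivity)
      _ = u n := by
          rw [hu_def]
          have hf : (0:ℝ) < n.factorial := by exact_mod_cast n.factorial_pos
          field_simp
  have hF0sum : Summable (fun n => F p α n x) := by
    apply Summable.of_norm_bounded (summable_master p R hp hRpos.le)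
    intro n
    have hf : (0:ℝ) < n.factorial := by exact_mod_cast n.factorial_pos
    have hxp : (0:ℝ) < x ^ (2 * α * (n:ℝ)) := Real.rpow_pos_of_pos hx _
    have h2 : x ^ (2 * α * (n:ℝ)) ≤ R ^ n := by
      rw [pow_rpow x hx n, hR]
      exact pow_le_pow_left₀ (Real.rpow_nonneg hx.le _)
        (Real.rpow_le_rpow hx.le (by linarith) (by positivity)) n
    rw [F, Real.norm_eq_abs, abs_mul, abs_of_pos hxp]
    calc |A p n| * x ^ (2 * α * (n:ℝ))
        ≤ (1 / ((n.factorial : ℝ) * Real.Gamma (p + n + 1))) * R ^ n :=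
          mul_le_mul (habsA n) h2 hxp.le (by positivity)
      _ = R ^ n / ((n.factorial : ℝ) * Real.Gamma (p + n + 1)) := by ring
      _ ≤ ((n:ℝ) + 1) * R ^ n / ((n.factorial : ℝ) * Real.Gamma (p + n + 1)) := by
          gcongr
          nlinarith [pow_nonneg hRpos.le n]
  have hg : HasDerivAt (fun z => ∑' n, F p α n z) (∑' n, Fd p α n x) x :=
    hasDerivAt_tsum_of_isPreconnected hu isOpen_Ioo isPreconnected_Ioo
      hderiv hbound hs hF0sum hs
  have heq : (fun t => t ^ (-(p * α)) * confBesselJ α p t)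
      =ᶠ[nhds x] (fun t => ∑' n, F p α n t) := by
    filter_upwards [Ioo_mem_nhds hs.1 hs.2] with t ht
    rw [confBesselJ, ← tsum_mul_left]
    exact tsum_congr fun n => key1 p α hp n t (htpos t ht)
  have hderiveq : deriv (fun t => t ^ (-(p * α)) * confBesselJ α p t) x = ∑' n, Fd p α n x := by
    rw [heq.deriv_eq]; exact hg.deriv
  have hFdsum : Summable (fun n => Fd p α n x) :=
    Summable.of_norm_bounded hu (fun n => hbound n x hs)
  rw [confDeriv, hderiveq, ← tsum_mul_left,
    Summable.tsum_eq_zero_add (hFdsum.mul_left (x ^ (1 - α)))]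
  have hz : x ^ (1 - α) * Fd p α 0 x = 0 := by
    rw [Fd]; simp
  rw [hz, zero_add]
  have hrhs : -(α * x ^ (-(p * α)) * confBesselJ α (p + 1) x)
      = ∑' m : ℕ, -(α * (x ^ (-(p * α)) * (((-1 : ℝ) ^ m /
          ((m.factorial : ℝ) * Real.Gamma (p + 1 + m + 1)))
          * (x ^ α / 2) ^ (2 * (m : ℝ) + (p + 1))))) := by
    rw [confBesselJ, mul_assoc, ← tsum_mul_left, ← tsum_mul_left, ← tsum_neg]
  rw [hrhs]
  exact tsum_congr fun m => key2 p α hp m x hx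
end

section
/- Let α ∈ (0,1] and p ≥ 1 real. For x > 0, T_α((J_α)_p(x)) = α·(J_α)_{p−1}(x) − (α·p/x^α)·(J_α)_p(x). -/
open Real

/-- `n! * Γ(p+1) ≤ Γ(p+n+1)` for `p ≥ 1`. -/
lemma gamma_fac_le (p : ℝ) (hp : 1 ≤ p) (n : ℕ) :
    (n.factorial : ℝ) * Real.Gamma (p + 1) ≤ Real.Gamma (p + n + 1) := by
  induction n with
  | zero => simp
  | succ n ih =>
    have hpos : (0:ℝ) < p + n + 1 := by positivity
    have h1 : Real.Gamma (p + (n+1:ℕ) + 1) = (p + n + 1) * Real.Gamma (p + n + 1) := by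
      have h : (p + ((n+1:ℕ):ℝ) + 1) = (p + n + 1) + 1 := by push_cast; ring
      rw [h, Real.Gamma_add_one hpos.ne']
    have hg : 0 < Real.Gamma (p + n + 1) := Real.Gamma_pos_of_pos hpos
    have hf : ((n+1:ℕ).factorial : ℝ) = (n+1) * n.factorial := by
      rw [Nat.factorial_succ]; push_cast; ring
    rw [h1, hf]
    have hn : (0:ℝ) ≤ (n:ℝ) := Nat.cast_nonneg n
    have hfp : (0:ℝ) < (n.factorial : ℝ) := by exact_mod_cast n.factorial_pos
    nlinarith [ih, hg, Real.Gamma_pos_of_pos (show (0:ℝ) < p + 1 by linarith), hfp]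

theorem conformable_bessel_deriv_iii (α : ℝ) (hα : α ∈ Set.Ioc (0:ℝ) 1)
    (p : ℝ) (hp : 1 ≤ p) (x : ℝ) (hx : 0 < x) :
    confDeriv α (confBesselJ α p) x
      = α * confBesselJ α (p - 1) x - (α * p / x ^ α) * confBesselJ α p x := by
  obtain ⟨hα0, hα1⟩ := hα
  have hp0 : (0:ℝ) < p := lt_of_lt_of_le one_pos hp
  have hK : 0 < Real.Gamma (p + 1) := Real.Gamma_pos_of_pos (by linarith)
  set K := Real.Gamma (p + 1) with hKdef
  -- the derivative of the n-th summand
  set g' : ℕ → ℝ → ℝ := fun n y =>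
    ((-1:ℝ)^n / ((n.factorial : ℝ) * Real.Gamma (p + n + 1)))
      * ((2*(n:ℝ)+p) * (y^α/2) ^ (2*(n:ℝ)+p-1) * (α * y^(α-1) / 2)) with hg'def
  have hxmem : x ∈ Set.Ioo (x/2) (2*x) := ⟨by linarith, by linarith⟩
  set M : ℝ := (2*x)^α/2 with hMdef
  have hM : 0 < M := by positivity
  set D : ℝ := α * (x/2)^(α-1)/2 with hDdef
  have hD : 0 ≤ D := by positivity
  set C : ℝ := D * M^(p-1) * (p+2) / K with hCdef
  have hC : 0 ≤ C := by positivity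
  -- gamma lower bound for coefficients
  have hGn : ∀ n : ℕ, (n.factorial : ℝ) * K ≤ Real.Gamma (p + n + 1) :=
    fun n => gamma_fac_le p hp n
  have hGpos : ∀ n : ℕ, 0 < Real.Gamma (p + n + 1) :=
    fun n => Real.Gamma_pos_of_pos (by positivity)
  have habs : ∀ n : ℕ, |((-1:ℝ)^n / ((n.factorial : ℝ) * Real.Gamma (p + n + 1)))|
      ≤ 1 / ((n.factorial : ℝ) * K) := by
    intro n
    have hf : (0:ℝ) < n.factorial := Nat.cast_pos.mpr n.factorial_pos
    rw [abs_div, abs_pow, abs_neg, abs_one, one_pow,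
      abs_of_pos (by positivity : (0:ℝ) < (n.factorial : ℝ) * Real.Gamma (p + n + 1))]
    apply one_div_le_one_div_of_le (by positivity)
    have h1 : (1:ℝ) ≤ (n.factorial : ℝ) := by exact_mod_cast n.factorial_pos
    nlinarith [hGn n, hK, hGpos n, h1]
  -- decomposition of rpow
  have hpow_split : ∀ (b : ℝ), 0 < b → ∀ n : ℕ,
      b ^ (2*(n:ℝ)+p-1) = b^(p-1) * (b^2)^n := by
    intro b hb n
    rw [show 2*(n:ℝ)+p-1 = (p-1) + ((2*n : ℕ):ℝ) by push_cast; ring,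
      Real.rpow_add hb, Real.rpow_natCast, pow_mul]
  have hpow_split' : ∀ (b : ℝ), 0 < b → ∀ n : ℕ,
      b ^ (2*(n:ℝ)+p) = b^p * (b^2)^n := by
    intro b hb n
    rw [show 2*(n:ℝ)+p = p + ((2*n : ℕ):ℝ) by push_cast; ring,
      Real.rpow_add hb, Real.rpow_natCast, pow_mul]
  have hcoef : ∀ n : ℕ, (2*(n:ℝ)+p) ≤ (p+2) * 2^n := by
    intro n
    have h1 : (n:ℝ) < 2^n := by
      exact_mod_cast Nat.lt_two_pow_self (n := n)
    have h2 : (1:ℝ) ≤ 2^n := by exact_mod_cast Nat.one_le_two_pow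
    nlinarith
  -- summable bound
  have hu : Summable (fun n : ℕ => C * (2*M^2)^n / n.factorial) := by
    simpa [mul_div_assoc] using (Real.summable_pow_div_factorial (2*M^2)).mul_left C
  -- derivative of each summand
  have hg : ∀ (n : ℕ) (y : ℝ), y ∈ Set.Ioo (x/2) (2*x) →
      HasDerivAt (fun z : ℝ => ((-1:ℝ)^n / ((n.factorial : ℝ) * Real.Gamma (p + n + 1)))
        * (z^α/2) ^ (2*(n:ℝ)+p)) (g' n y) y := by
    intro n y hy
    have hy0 : 0 < y := lt_trans (by linarith) hy.1
    have h1 : HasDerivAt (fun z : ℝ => z ^ α / 2) (α * y^(α-1) / 2) y := by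
      have := Real.hasDerivAt_rpow_const (x := y) (p := α) (Or.inl hy0.ne')
      exact this.div_const 2
    have hb : y^α/2 ≠ 0 := by positivity
    have h2 := h1.rpow_const (p := 2*(n:ℝ)+p) (Or.inl hb)
    have h3 := h2.const_mul ((-1:ℝ)^n / ((n.factorial : ℝ) * Real.Gamma (p + n + 1)))
    refine h3.congr_deriv ?_
    rw [hg'def]
    ring
  -- bound on the derivatives on the interval
  have hg'bd : ∀ (n : ℕ) (y : ℝ), y ∈ Set.Ioo (x/2) (2*x) →
      ‖g' n y‖ ≤ C * (2*M^2)^n / n.factorial := by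
    intro n y hy
    have hy0 : 0 < y := lt_trans (by linarith) hy.1
    have hb0 : 0 < y^α/2 := by positivity
    have hbM : y^α/2 ≤ M := by
      have h := Real.rpow_le_rpow hy0.le hy.2.le hα0.le
      rw [hMdef]; linarith
    have hpowle : (y^α/2) ^ (2*(n:ℝ)+p-1) ≤ M ^ (2*(n:ℝ)+p-1) :=
      Real.rpow_le_rpow hb0.le hbM
        (by have h0 : (0:ℝ) ≤ (n:ℝ) := Nat.cast_nonneg n; linarith)
    have hdle : α * y^(α-1)/2 ≤ D := by
      rw [hDdef]
      have : y^(α-1) ≤ (x/2)^(α-1) :=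
        Real.rpow_le_rpow_of_nonpos (by linarith) hy.1.le (by linarith)
      nlinarith
    have hd0 : 0 ≤ α * y^(α-1)/2 :=
      div_nonneg (mul_nonneg hα0.le (Real.rpow_nonneg hy0.le _)) (by norm_num)
    have hnorm : ‖g' n y‖ = |((-1:ℝ)^n / ((n.factorial : ℝ) * Real.Gamma (p + n + 1)))|
        * ((2*(n:ℝ)+p) * (y^α/2) ^ (2*(n:ℝ)+p-1) * (α * y^(α-1) / 2)) := by
      rw [hg'def]
      rw [Real.norm_eq_abs, abs_mul]
      congr 1
      exact abs_of_nonneg (by positivity)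
    rw [hnorm]
    calc |((-1:ℝ)^n / ((n.factorial : ℝ) * Real.Gamma (p + n + 1)))|
        * ((2*(n:ℝ)+p) * (y^α/2) ^ (2*(n:ℝ)+p-1) * (α * y^(α-1) / 2))
        ≤ (1 / ((n.factorial : ℝ) * K))
          * (((p+2) * 2^n) * M ^ (2*(n:ℝ)+p-1) * D) := by
          gcongr <;> first | exact habs n | exact hcoef n
      _ = C * (2*M^2)^n / n.factorial := by
          rw [hpow_split M hM n, hCdef, mul_pow]
          have hf : ((n.factorial : ℝ)) ≠ 0 := Nat.cast_ne_zero.mpr n.factorial_pos.ne'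
          field_simp
  -- summability at x
  have hg0 : Summable (fun n : ℕ => ((-1:ℝ)^n / ((n.factorial : ℝ) * Real.Gamma (p + n + 1)))
      * (x^α/2) ^ (2*(n:ℝ)+p)) := by
    set N : ℝ := x^α/2 with hNdef
    have hN : 0 < N := by positivity
    apply Summable.of_norm_bounded (g := fun n : ℕ => (N^p / K) * ((N^2)^n / n.factorial))
    · simpa [mul_div_assoc] using (Real.summable_pow_div_factorial (N^2)).mul_left (N^p / K)
    · intro n
      have hf : ((n.factorial : ℝ)) ≠ 0 := Nat.cast_ne_zero.mpr n.factorial_pos.ne'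
      have hf0 : (0:ℝ) < n.factorial := Nat.cast_pos.mpr n.factorial_pos
      rw [Real.norm_eq_abs, abs_mul, abs_of_nonneg (by positivity : (0:ℝ) ≤ N ^ (2*(n:ℝ)+p)),
        hpow_split' N hN n]
      calc |((-1:ℝ)^n / ((n.factorial : ℝ) * Real.Gamma (p + n + 1)))| * (N^p * (N^2)^n)
          ≤ (1 / ((n.factorial : ℝ) * K)) * (N^p * (N^2)^n) := by
            gcongr
            exact habs n
        _ = (N^p / K) * ((N^2)^n / n.factorial) := by field_simp
  -- the termwise differentiation
  have hmain : HasDerivAt (fun z : ℝ => ∑' n : ℕ,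
      ((-1:ℝ)^n / ((n.factorial : ℝ) * Real.Gamma (p + n + 1))) * (z^α/2) ^ (2*(n:ℝ)+p))
      (∑' n : ℕ, g' n x) x :=
    hasDerivAt_tsum_of_isPreconnected hu isOpen_Ioo isPreconnected_Ioo
      hg hg'bd hxmem hg0 hxmem
  have hderiv : deriv (confBesselJ α p) x = ∑' n : ℕ, g' n x := by
    have he : confBesselJ α p = fun z : ℝ => ∑' n : ℕ,
        ((-1:ℝ)^n / ((n.factorial : ℝ) * Real.Gamma (p + n + 1))) * (z^α/2) ^ (2*(n:ℝ)+p) := by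
      funext z; rfl
    rw [he]
    exact hmain.deriv
  -- summability of the derivative series at x
  have hg'sum : Summable (fun n : ℕ => g' n x) :=
    Summable.of_norm_bounded hu (fun n => hg'bd n x hxmem)
  -- termwise identity
  have hxα : (x:ℝ)^α ≠ 0 := (Real.rpow_pos_of_pos hx α).ne'
  have hterm : ∀ n : ℕ, x^(1-α) * g' n x
      = α * (((-1:ℝ)^n / ((n.factorial : ℝ) * Real.Gamma (p - 1 + n + 1)))
          * (x^α/2) ^ (2*(n:ℝ) + (p-1)))
        - (α*p/x^α) * (((-1:ℝ)^n / ((n.factorial : ℝ) * Real.Gamma (p + n + 1)))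
          * (x^α/2) ^ (2*(n:ℝ)+p)) := by
    intro n
    have hpn : (0:ℝ) < p + n := by positivity
    have hG2 : Real.Gamma (p + n + 1) = (p + n) * Real.Gamma (p + n) :=
      Real.Gamma_add_one hpn.ne'
    have hG1 : Real.Gamma (p - 1 + n + 1) = Real.Gamma (p + n) := by
      rw [show p - 1 + (n:ℝ) + 1 = p + n by ring]
    have hGp : (0:ℝ) < Real.Gamma (p + n) := Real.Gamma_pos_of_pos hpn
    have hb0 : (0:ℝ) < x^α/2 := by positivity
    have hsplit : (x^α/2) ^ (2*(n:ℝ)+p) = (x^α/2) ^ (2*(n:ℝ)+p-1) * (x^α/2) := by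
      rw [← Real.rpow_add_one hb0.ne' (2*(n:ℝ)+p-1)]
      congr 1
      ring
    have hexp : (2*(n:ℝ) + (p-1)) = 2*(n:ℝ)+p-1 := by ring
    have hx1 : x^(1-α) = (x^(α-1))⁻¹ := by
      rw [show (1-α) = -(α-1) by ring, Real.rpow_neg hx.le]
    have hx2 : (x:ℝ)^(α-1) ≠ 0 := (Real.rpow_pos_of_pos hx (α-1)).ne'
    have hf : ((n.factorial : ℝ)) ≠ 0 := Nat.cast_ne_zero.mpr n.factorial_pos.ne'
    simp only [hg'def]
    rw [hG2, hG1, hexp, hsplit, hx1]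
    field_simp
    ring
  -- assembling everything
  have hS2 : Summable (fun n : ℕ => (α*p/x^α)
      * (((-1:ℝ)^n / ((n.factorial : ℝ) * Real.Gamma (p + n + 1)))
        * (x^α/2) ^ (2*(n:ℝ)+p))) := hg0.mul_left _
  have hS1 : Summable (fun n : ℕ => x^(1-α) * g' n x) := hg'sum.mul_left _
  have hSb : Summable (fun n : ℕ => α
      * (((-1:ℝ)^n / ((n.factorial : ℝ) * Real.Gamma (p - 1 + n + 1)))
        * (x^α/2) ^ (2*(n:ℝ) + (p-1)))) := by
    refine (hS1.add hS2).congr (fun n => ?_)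
    have := hterm n
    linarith
  calc confDeriv α (confBesselJ α p) x
      = x^(1-α) * ∑' n : ℕ, g' n x := by rw [confDeriv, hderiv]
    _ = ∑' n : ℕ, x^(1-α) * g' n x := (tsum_mul_left).symm
    _ = ∑' n : ℕ, (α * (((-1:ℝ)^n / ((n.factorial : ℝ) * Real.Gamma (p - 1 + n + 1)))
          * (x^α/2) ^ (2*(n:ℝ) + (p-1)))
        - (α*p/x^α) * (((-1:ℝ)^n / ((n.factorial : ℝ) * Real.Gamma (p + n + 1)))
          * (x^α/2) ^ (2*(n:ℝ)+p))) := tsum_congr hterm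
    _ = (∑' n : ℕ, α * (((-1:ℝ)^n / ((n.factorial : ℝ) * Real.Gamma (p - 1 + n + 1)))
          * (x^α/2) ^ (2*(n:ℝ) + (p-1))))
        - ∑' n : ℕ, (α*p/x^α) * (((-1:ℝ)^n / ((n.factorial : ℝ) * Real.Gamma (p + n + 1)))
          * (x^α/2) ^ (2*(n:ℝ)+p)) := Summable.tsum_sub hSb hS2
    _ = α * confBesselJ α (p-1) x - (α*p/x^α) * confBesselJ α p x := by
        rw [tsum_mul_left, tsum_mul_left]; rfl
end

section
/- Let α ∈ (0,1] and p ≥ 0 real. For x > 0, T_α((J_α)_p(x)) = (α·p/x^α)·(J_α)_p(x) − α·(J_α)_{p+1}(x). -/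
open Real

noncomputable def besselTerm (α p : ℝ) (n : ℕ) (z : ℝ) : ℝ :=
  ((-1 : ℝ) ^ n / ((n.factorial : ℝ) * Real.Gamma (p + n + 1)))
    * (z ^ α / 2) ^ (2 * (n : ℝ) + p)

noncomputable def besselTerm' (α p : ℝ) (n : ℕ) (z : ℝ) : ℝ :=
  ((-1 : ℝ) ^ n / ((n.factorial : ℝ) * Real.Gamma (p + n + 1))) / (2 : ℝ) ^ (2 * (n : ℝ) + p)
    * ((α * (2 * (n : ℝ) + p)) * z ^ (α * (2 * (n : ℝ) + p) - 1))

lemma gamma_fact_le {p : ℝ} (hp : 0 ≤ p) (n : ℕ) :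
    Real.Gamma (p + 1) * n.factorial ≤ Real.Gamma (p + n + 1) := by
  induction n with
  | zero => simp
  | succ n ih =>
    have hpos : (0:ℝ) < p + n + 1 := by positivity
    have h1 : Real.Gamma (p + (n + 1 : ℕ) + 1) = (p + n + 1) * Real.Gamma (p + n + 1) := by
      push_cast
      rw [show p + ((n:ℝ) + 1) + 1 = (p + n + 1) + 1 by ring, Real.Gamma_add_one hpos.ne']
    rw [h1, Nat.factorial_succ]
    push_cast
    have hΓ1 : (0:ℝ) ≤ Real.Gamma (p + 1) := by positivity
    calc Real.Gamma (p + 1) * (((n:ℝ) + 1) * n.factorial)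
        = ((n:ℝ) + 1) * (Real.Gamma (p + 1) * n.factorial) := by ring
      _ ≤ (p + n + 1) * Real.Gamma (p + n + 1) :=
          mul_le_mul (by linarith)
            ih (mul_nonneg hΓ1 (by positivity)) (by linarith)

lemma summable_bd {p s : ℝ} (hp : 0 ≤ p) (hs : 0 ≤ s) :
    Summable fun n : ℕ => (2 * (n:ℝ) + p) * s ^ n / n.factorial := by
  refine Summable.of_nonneg_of_le (fun n => by positivity)
    (fun n => ?_) ((Real.summable_pow_div_factorial (2 * s)).mul_left (2 + p))
  have h2n : ((n:ℝ) + 1) ≤ 2 ^ n := by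
    exact_mod_cast Nat.succ_le_of_lt (Nat.lt_two_pow_self (n := n))
  have hn0 : (0:ℝ) ≤ (n:ℝ) := Nat.cast_nonneg n
  have h1 : (2 * (n:ℝ) + p) ≤ (2 + p) * 2 ^ n := by nlinarith
  calc (2 * (n:ℝ) + p) * s ^ n / n.factorial
      ≤ ((2 + p) * 2 ^ n) * s ^ n / n.factorial := by
        gcongr
      _ = (2 + p) * ((2 * s) ^ n / n.factorial) := by
        rw [mul_pow]; ring

theorem conformable_bessel_deriv_iv (α : ℝ) (hα : α ∈ Set.Ioc (0:ℝ) 1)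
    (p : ℝ) (hp : 0 ≤ p) (x : ℝ) (hx : 0 < x) :
    confDeriv α (confBesselJ α p) x
      = (α * p / x ^ α) * confBesselJ α p x - α * confBesselJ α (p + 1) x := by
  obtain ⟨hα0, hα1⟩ := hα
  have hxa : (0:ℝ) < x ^ α := Real.rpow_pos_of_pos hx α
  have hΓ1 : (0:ℝ) < Real.Gamma (p + 1) := by positivity
  have hΓ : ∀ n : ℕ, (0:ℝ) < Real.Gamma (p + n + 1) := fun n => by positivity
  have hΓle : ∀ n : ℕ, Real.Gamma (p + 1) ≤ Real.Gamma (p + n + 1) := by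
    intro n
    refine le_trans ?_ (gamma_fact_le hp n)
    have h1 : (1:ℝ) ≤ n.factorial := by exact_mod_cast Nat.one_le_iff_ne_zero.2 n.factorial_pos.ne'
    nlinarith
  have hcabs : ∀ n : ℕ, |(-1 : ℝ) ^ n / ((n.factorial : ℝ) * Real.Gamma (p + n + 1))|
      = 1 / ((n.factorial : ℝ) * Real.Gamma (p + n + 1)) := by
    intro n
    rw [abs_div, abs_pow, abs_neg, abs_one, one_pow, abs_of_pos (by positivity)]
  -- derivative of each term
  have hderiv : ∀ (n : ℕ) (y : ℝ), 0 < y →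
      HasDerivAt (besselTerm α p n) (besselTerm' α p n y) y := by
    intro n y hy
    have h1 : HasDerivAt (fun z : ℝ => z ^ (α * (2 * (n:ℝ) + p)))
        ((α * (2 * (n:ℝ) + p)) * y ^ (α * (2 * (n:ℝ) + p) - 1)) y :=
      Real.hasDerivAt_rpow_const (Or.inl hy.ne')
    have h2 := h1.const_mul
      (((-1 : ℝ) ^ n / ((n.factorial : ℝ) * Real.Gamma (p + n + 1))) / (2 : ℝ) ^ (2 * (n:ℝ) + p))
    refine HasDerivAt.congr_of_eventuallyEq h2 ?_
    filter_upwards [eventually_gt_nhds hy] with z hz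
    unfold besselTerm
    rw [Real.div_rpow (Real.rpow_nonneg hz.le α) (by norm_num), ← Real.rpow_mul hz.le]
    ring
  -- the open set and constants
  set t : Set ℝ := Set.Ioo (x / 2) (2 * x) with ht
  have hxt : x ∈ t := ⟨by linarith, by linarith⟩
  have hyt : ∀ y ∈ t, 0 < y := fun y hy => lt_trans (by linarith) hy.1
  set M : ℝ := max (2 * x) 1 with hM
  have hM1 : (1:ℝ) ≤ M := le_max_right _ _
  have hM0 : (0:ℝ) < M := by linarith
  have hMx : 2 * x ≤ M := le_max_left _ _
  set R : ℝ := M ^ (2 * α) with hR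
  have hR0 : (0:ℝ) < R := Real.rpow_pos_of_pos hM0 _
  set K : ℝ := α * (2 / x) * M ^ (α * p) / (Real.Gamma (p + 1) * (2:ℝ) ^ p) with hK
  set u : ℕ → ℝ := fun n => K * ((2 * (n:ℝ) + p) * (R / 4) ^ n / n.factorial) with hu_def
  have hu : Summable u := (summable_bd hp (by positivity)).mul_left K
  have h2p0 : (0:ℝ) < (2:ℝ) ^ p := Real.rpow_pos_of_pos two_pos p
  -- splitting 2 ^ (2n+p)
  have h2e : ∀ n : ℕ, (2:ℝ) ^ (2 * (n:ℝ) + p) = 2 ^ p * 4 ^ n := by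
    intro n
    rw [show 2 * (n:ℝ) + p = p + 2 * (n:ℝ) by ring, Real.rpow_add two_pos,
      show 2 * (n:ℝ) = ((2 * n : ℕ) : ℝ) by push_cast; ring, Real.rpow_natCast, pow_mul]
    norm_num
  -- bound on derivative terms
  have hbound : ∀ (n : ℕ), ∀ y ∈ t, ‖besselTerm' α p n y‖ ≤ u n := by
    intro n y hy
    have hy0 : 0 < y := hyt y hy
    have he0 : (0:ℝ) ≤ 2 * (n:ℝ) + p := by positivity
    have hae0 : (0:ℝ) ≤ α * (2 * (n:ℝ) + p) := by positivity
    have h2en : (0:ℝ) < (2:ℝ) ^ (2 * (n:ℝ) + p) := Real.rpow_pos_of_pos two_pos _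
    have hnorm : ‖besselTerm' α p n y‖
        = (1 / ((n.factorial : ℝ) * Real.Gamma (p + n + 1))) / (2:ℝ) ^ (2 * (n:ℝ) + p)
          * ((α * (2 * (n:ℝ) + p)) * y ^ (α * (2 * (n:ℝ) + p) - 1)) := by
      unfold besselTerm'
      rw [Real.norm_eq_abs, abs_mul, abs_div, hcabs, abs_of_pos h2en,
        abs_of_nonneg (mul_nonneg hae0 (Real.rpow_nonneg hy0.le _))]
    -- bound the power of y
    have hystep : y ^ (α * (2 * (n:ℝ) + p) - 1) ≤ (2 / x) * M ^ (α * p) * R ^ n := by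
      have e1 : y ^ (α * (2 * (n:ℝ) + p) - 1)
          = y ^ (α * (2 * (n:ℝ) + p)) * (1 / y) := by
        rw [Real.rpow_sub hy0, Real.rpow_one]; ring
      have e2 : y ^ (α * (2 * (n:ℝ) + p)) ≤ M ^ (α * (2 * (n:ℝ) + p)) :=
        Real.rpow_le_rpow hy0.le (le_trans hy.2.le hMx) hae0
      have e3 : M ^ (α * (2 * (n:ℝ) + p)) = M ^ (α * p) * R ^ n := by
        rw [show α * (2 * (n:ℝ) + p) = α * p + (2 * α) * (n:ℝ) by ring,
          Real.rpow_add hM0, Real.rpow_mul hM0.le (2*α) (n:ℝ), Real.rpow_natCast]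
      have e4 : 1 / y ≤ 2 / x := by
        rw [div_le_div_iff₀ hy0 hx]; linarith [hy.1]
      calc y ^ (α * (2 * (n:ℝ) + p) - 1)
          = y ^ (α * (2 * (n:ℝ) + p)) * (1 / y) := e1
        _ ≤ M ^ (α * (2 * (n:ℝ) + p)) * (2 / x) :=
            mul_le_mul e2 e4 (by positivity) (Real.rpow_nonneg hM0.le _)
        _ = (2 / x) * M ^ (α * p) * R ^ n := by rw [e3]; ring
    rw [hnorm, h2e n]
    calc (1 / ((n.factorial : ℝ) * Real.Gamma (p + n + 1))) / ((2:ℝ) ^ p * 4 ^ n)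
          * ((α * (2 * (n:ℝ) + p)) * y ^ (α * (2 * (n:ℝ) + p) - 1))
        ≤ (1 / ((n.factorial : ℝ) * Real.Gamma (p + 1))) / ((2:ℝ) ^ p * 4 ^ n)
          * ((α * (2 * (n:ℝ) + p)) * ((2 / x) * M ^ (α * p) * R ^ n)) := by
          have hf1 : (1:ℝ) ≤ n.factorial := by
            exact_mod_cast Nat.one_le_iff_ne_zero.2 n.factorial_pos.ne'
          gcongr
          all_goals
            first
              | exact hΓle n
              | exact mul_pos (by exact_mod_cast n.factorial_pos) hΓ1
              | positivity
      _ = K * ((2 * (n:ℝ) + p) * (R / 4) ^ n / n.factorial) := by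
          rw [hK, div_pow]
          have hf0 : ((n.factorial : ℝ)) ≠ 0 := by exact_mod_cast n.factorial_pos.ne'
          field_simp
  -- summability at x
  have hg0 : Summable fun n => besselTerm α p n x := by
    set w : ℝ := x ^ α / 2 with hw
    have hw0 : (0:ℝ) < w := by positivity
    refine Summable.of_norm_bounded
      (g := fun n => (w ^ p / Real.Gamma (p + 1)) * ((w ^ 2) ^ n / n.factorial))
      (((Real.summable_pow_div_factorial (w ^ 2)).mul_left _)) (fun n => ?_)
    have hwsplit : w ^ (2 * (n:ℝ) + p) = w ^ p * (w ^ 2) ^ n := by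
      rw [show 2 * (n:ℝ) + p = p + 2 * (n:ℝ) by ring, Real.rpow_add hw0,
        show 2 * (n:ℝ) = ((2 * n : ℕ) : ℝ) by push_cast; ring, Real.rpow_natCast, pow_mul]
    have : ‖besselTerm α p n x‖
        = 1 / ((n.factorial : ℝ) * Real.Gamma (p + n + 1)) * (w ^ p * (w ^ 2) ^ n) := by
      unfold besselTerm
      rw [Real.norm_eq_abs, abs_mul, hcabs, ← hw,
        abs_of_nonneg (Real.rpow_nonneg hw0.le _), hwsplit]
    rw [this]
    have hf1 : (1:ℝ) ≤ n.factorial := by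
      exact_mod_cast Nat.one_le_iff_ne_zero.2 n.factorial_pos.ne'
    calc 1 / ((n.factorial : ℝ) * Real.Gamma (p + n + 1)) * (w ^ p * (w ^ 2) ^ n)
        ≤ 1 / ((n.factorial : ℝ) * Real.Gamma (p + 1)) * (w ^ p * (w ^ 2) ^ n) := by
          gcongr
          all_goals
            first
              | exact hΓle n
              | exact mul_pos (by exact_mod_cast n.factorial_pos) hΓ1
              | positivity
      _ = (w ^ p / Real.Gamma (p + 1)) * ((w ^ 2) ^ n / n.factorial) := by
          have hf0 : ((n.factorial : ℝ)) ≠ 0 := by exact_mod_cast n.factorial_pos.ne'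
          field_simp
  -- differentiate the series
  have key : HasDerivAt (fun z => ∑' n : ℕ, besselTerm α p n z)
      (∑' n : ℕ, besselTerm' α p n x) x :=
    hasDerivAt_tsum_of_isPreconnected hu isOpen_Ioo isPreconnected_Ioo
      (fun n y hy => hderiv n y (hyt y hy)) hbound hxt hg0 hxt
  have hJ : confBesselJ α p = fun z => ∑' n : ℕ, besselTerm α p n z := rfl
  have hd : deriv (confBesselJ α p) x = ∑' n : ℕ, besselTerm' α p n x := by
    rw [hJ]; exact key.deriv
  -- summability facts
  have hS' : Summable fun n => besselTerm' α p n x :=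
    hu.of_norm_bounded (fun n => hbound n x hxt)
  have hL : Summable fun n => x ^ (1 - α) * besselTerm' α p n x := hS'.mul_left _
  have hA : Summable fun n => (α * p / x ^ α) * besselTerm α p n x := hg0.mul_left _
  have hB : Summable fun n =>
      x ^ (1 - α) * besselTerm' α p n x - (α * p / x ^ α) * besselTerm α p n x := hL.sub hA
  -- identify the difference terms
  have hB_eq : ∀ n : ℕ,
      x ^ (1 - α) * besselTerm' α p n x - (α * p / x ^ α) * besselTerm α p n x
      = 2 * α * (n:ℝ) * ((-1 : ℝ) ^ n / ((n.factorial : ℝ) * Real.Gamma (p + n + 1)))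
          / (2:ℝ) ^ (2 * (n:ℝ) + p) * x ^ (α * (2 * (n:ℝ) + p) - α) := by
    intro n
    unfold besselTerm besselTerm'
    have h1 : x ^ (1 - α) * x ^ (α * (2 * (n:ℝ) + p) - 1)
        = x ^ (α * (2 * (n:ℝ) + p) - α) := by
      rw [← Real.rpow_add hx]; ring_nf
    have h2 : (x ^ α / 2) ^ (2 * (n:ℝ) + p)
        = x ^ (α * (2 * (n:ℝ) + p)) / 2 ^ (2 * (n:ℝ) + p) := by
      rw [Real.div_rpow (Real.rpow_nonneg hx.le α) (by norm_num), ← Real.rpow_mul hx.le]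
    have h3 : x ^ (α * (2 * (n:ℝ) + p)) / x ^ α = x ^ (α * (2 * (n:ℝ) + p) - α) :=
      (Real.rpow_sub hx _ _).symm
    set C : ℝ := (-1 : ℝ) ^ n / ((n.factorial : ℝ) * Real.Gamma (p + n + 1)) with hC
    calc x ^ (1 - α) * (C / (2:ℝ) ^ (2 * (n:ℝ) + p)
            * ((α * (2 * (n:ℝ) + p)) * x ^ (α * (2 * (n:ℝ) + p) - 1)))
          - (α * p / x ^ α) * (C * (x ^ α / 2) ^ (2 * (n:ℝ) + p))
        = C / (2:ℝ) ^ (2 * (n:ℝ) + p) * (α * (2 * (n:ℝ) + p))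
            * (x ^ (1 - α) * x ^ (α * (2 * (n:ℝ) + p) - 1))
          - (α * p) * (C / (2:ℝ) ^ (2 * (n:ℝ) + p))
            * (x ^ (α * (2 * (n:ℝ) + p)) / x ^ α) := by rw [h2]; ring
      _ = C / (2:ℝ) ^ (2 * (n:ℝ) + p) * (α * (2 * (n:ℝ) + p))
            * x ^ (α * (2 * (n:ℝ) + p) - α)
          - (α * p) * (C / (2:ℝ) ^ (2 * (n:ℝ) + p)) * x ^ (α * (2 * (n:ℝ) + p) - α) := by
          rw [h1, h3]
      _ = 2 * α * (n:ℝ) * C / (2:ℝ) ^ (2 * (n:ℝ) + p) * x ^ (α * (2 * (n:ℝ) + p) - α) := by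
          ring
  have hBsum : Summable fun n : ℕ =>
      2 * α * (n:ℝ) * ((-1 : ℝ) ^ n / ((n.factorial : ℝ) * Real.Gamma (p + n + 1)))
        / (2:ℝ) ^ (2 * (n:ℝ) + p) * x ^ (α * (2 * (n:ℝ) + p) - α) := hB.congr hB_eq
  -- the shifted sum equals the Bessel function with parameter p+1
  have hshift : ∀ m : ℕ,
      2 * α * ((m + 1 : ℕ) : ℝ)
        * ((-1 : ℝ) ^ (m + 1) / (((m + 1).factorial : ℝ) * Real.Gamma (p + (m + 1 : ℕ) + 1)))
        / (2:ℝ) ^ (2 * ((m + 1 : ℕ) : ℝ) + p) * x ^ (α * (2 * ((m + 1 : ℕ) : ℝ) + p) - α)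
      = -α * (((-1 : ℝ) ^ m / ((m.factorial : ℝ) * Real.Gamma (p + 1 + m + 1)))
          * (x ^ α / 2) ^ (2 * (m:ℝ) + (p + 1))) := by
    intro m
    have hΓeq : Real.Gamma (p + ((m + 1 : ℕ) : ℝ) + 1) = Real.Gamma (p + 1 + m + 1) := by
      congr 1; push_cast; ring
    have hexp : α * (2 * ((m + 1 : ℕ) : ℝ) + p) - α = α * (2 * (m:ℝ) + (p + 1)) := by
      push_cast; ring
    have h2pow : (2:ℝ) ^ (2 * ((m + 1 : ℕ) : ℝ) + p)
        = 2 * (2:ℝ) ^ (2 * (m:ℝ) + (p + 1)) := by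
      rw [show 2 * ((m + 1 : ℕ) : ℝ) + p = 1 + (2 * (m:ℝ) + (p + 1)) by push_cast; ring,
        Real.rpow_add two_pos, Real.rpow_one]
    have hsplit : (x ^ α / 2) ^ (2 * (m:ℝ) + (p + 1))
        = x ^ (α * (2 * (m:ℝ) + (p + 1))) / 2 ^ (2 * (m:ℝ) + (p + 1)) := by
      rw [Real.div_rpow (Real.rpow_nonneg hx.le α) (by norm_num), ← Real.rpow_mul hx.le]
    rw [hΓeq, hexp, h2pow, hsplit]
    have hfact : (((m + 1).factorial : ℝ)) = ((m:ℝ) + 1) * m.factorial := by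
      rw [Nat.factorial_succ]; push_cast; ring
    rw [hfact, pow_succ]
    have hq0 : (0:ℝ) < (2:ℝ) ^ (2 * (m:ℝ) + (p + 1)) := Real.rpow_pos_of_pos two_pos _
    have hΓm : (0:ℝ) < Real.Gamma (p + 1 + m + 1) := by positivity
    have hf0 : ((m.factorial : ℝ)) ≠ 0 := by exact_mod_cast m.factorial_pos.ne'
    have hm1 : ((m:ℝ) + 1) ≠ 0 := by positivity
    push_cast
    field_simp
  -- put it all together
  rw [confDeriv, hd, ← tsum_mul_left]
  have step1 : (∑' n : ℕ, x ^ (1 - α) * besselTerm' α p n x)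
      = (∑' n : ℕ, (α * p / x ^ α) * besselTerm α p n x)
        + ∑' n : ℕ, (x ^ (1 - α) * besselTerm' α p n x
            - (α * p / x ^ α) * besselTerm α p n x) := by
    rw [← Summable.tsum_add hA hB]
    exact tsum_congr fun n => by ring
  rw [step1]
  have step2 : (∑' n : ℕ, (α * p / x ^ α) * besselTerm α p n x)
      = (α * p / x ^ α) * confBesselJ α p x := by
    rw [tsum_mul_left]; rfl
  have step3 : (∑' n : ℕ, (x ^ (1 - α) * besselTerm' α p n x
      - (α * p / x ^ α) * besselTerm α p n x)) = -α * confBesselJ α (p + 1) x := by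
    rw [tsum_congr hB_eq, Summable.tsum_eq_zero_add hBsum]
    have h0 : 2 * α * ((0:ℕ):ℝ) * ((-1 : ℝ) ^ (0:ℕ)
        / (((0:ℕ).factorial : ℝ) * Real.Gamma (p + (0:ℕ) + 1)))
        / (2:ℝ) ^ (2 * ((0:ℕ):ℝ) + p) * x ^ (α * (2 * ((0:ℕ):ℝ) + p) - α) = 0 := by
      norm_num
    rw [h0, zero_add]
    have : confBesselJ α (p + 1) x
        = ∑' m : ℕ, ((-1 : ℝ) ^ m / ((m.factorial : ℝ) * Real.Gamma (p + 1 + m + 1)))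
            * (x ^ α / 2) ^ (2 * (m:ℝ) + (p + 1)) := rfl
    rw [this, ← tsum_mul_left]
    exact tsum_congr fun m => hshift m
  rw [step2, step3]
  ring
end
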